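/- arXiv:1504.03761 — 5 statements merged into one kernel-verified Lean document; each statement's English description precedes it below -/
import Mathlib

section
/- For a real n×n matrix A, the spectral radius of A is less than 1 if and only if there exists a symmetric positive definite matrix P such that P − AᵀPA is positive definite. -/
open Matrix Filter
open scoped NNReal ENNReal

/-- Spectral radius of a real square matrix: maximum modulus of its complex eigenvalues. -/
noncomputable def specRad {n : ℕ} (A : Matrix (Fin n) (Fin n) ℝ) : ℝ :=
  sSup {r : ℝ | ∃ μ : ℂ, μ ∈ spectrum ℂ (A.map (algebraMap ℝ ℂ)) ∧ r = ‖μ‖}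

/-- A symmetric real matrix is positive definite: xᵀQx > 0 for all nonzero x. -/
def PosDefQuad {n : ℕ} (Q : Matrix (Fin n) (Fin n) ℝ) : Prop :=
  ∀ x : Fin n → ℝ, x ≠ 0 → 0 < x ⬝ᵥ Q.mulVec x

namespace LyapunovAux

variable {n : ℕ}

lemma dot_self_nonneg (x : Fin n → ℝ) : 0 ≤ x ⬝ᵥ x :=
  Finset.sum_nonneg fun _ _ => mul_self_nonneg _

lemma dot_self_pos {x : Fin n → ℝ} (hx : x ≠ 0) : 0 < x ⬝ᵥ x := by
  obtain ⟨i, hi⟩ : ∃ i, x i ≠ 0 := by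
    by_contra h; push_neg at h; exact hx (funext h)
  exact Finset.sum_pos' (fun j _ => mul_self_nonneg _)
    ⟨i, Finset.mem_univ i, mul_self_pos.mpr hi⟩

lemma dot_cast (Q : Matrix (Fin n) (Fin n) ℝ) (a b : Fin n → ℝ) :
    (fun i => (a i : ℂ)) ⬝ᵥ (Q.map (algebraMap ℝ ℂ)).mulVec (fun i => (b i : ℂ))
      = ((a ⬝ᵥ Q.mulVec b : ℝ) : ℂ) := by
  simp only [dotProduct, mulVec, Matrix.map_apply, Complex.coe_algebraMap]
  push_cast
  rfl

lemma star_mulVec_real (A : Matrix (Fin n) (Fin n) ℝ) (v : Fin n → ℂ) :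
    star ((A.map (algebraMap ℝ ℂ)).mulVec v) = (A.map (algebraMap ℝ ℂ)).mulVec (star v) := by
  funext i
  simp only [Pi.star_apply, mulVec, dotProduct, Matrix.map_apply, Complex.coe_algebraMap,
    star_sum, star_mul', Complex.star_def, Complex.conj_ofReal]

lemma exists_eigvec {A : Matrix (Fin n) (Fin n) ℂ} {μ : ℂ} (h : μ ∈ spectrum ℂ A) :
    ∃ v : Fin n → ℂ, v ≠ 0 ∧ A.mulVec v = μ • v := by
  rw [← AlgEquiv.spectrum_eq (Matrix.toLinAlgEquiv' : Matrix (Fin n) (Fin n) ℂ ≃ₐ[ℂ] _) A] at h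
  have h' : Module.End.HasEigenvalue (Matrix.toLinAlgEquiv' A) μ :=
    Module.End.hasEigenvalue_iff_mem_spectrum.mpr h
  obtain ⟨v, hv⟩ := h'.exists_hasEigenvector
  refine ⟨v, hv.right, ?_⟩
  have h2 := hv.apply_eq_smul
  rw [show (Matrix.toLinAlgEquiv' A : (Fin n → ℂ) →ₗ[ℂ] (Fin n → ℂ)) v = A.mulVec v from rfl] at h2
  exact h2

lemma dot_symm (Q : Matrix (Fin n) (Fin n) ℝ) (hQ : Q.IsSymm) (a b : Fin n → ℝ) :
    a ⬝ᵥ Q.mulVec b = b ⬝ᵥ Q.mulVec a := by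
  nth_rewrite 1 [← hQ]
  rw [dotProduct_mulVec, vecMul_transpose, dotProduct_comm]

lemma herm_form (Q : Matrix (Fin n) (Fin n) ℝ) (hQ : Q.IsSymm) (v : Fin n → ℂ) :
    star v ⬝ᵥ (Q.map (algebraMap ℝ ℂ)).mulVec v
      = (((fun i => (v i).re) ⬝ᵥ Q.mulVec (fun i => (v i).re)
          + (fun i => (v i).im) ⬝ᵥ Q.mulVec (fun i => (v i).im) : ℝ) : ℂ) := by
  set x : Fin n → ℝ := fun i => (v i).re with hx
  set y : Fin n → ℝ := fun i => (v i).im with hy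
  have hv : v = (fun i => (x i : ℂ)) + Complex.I • (fun i => (y i : ℂ)) := by
    funext i
    simp only [Pi.add_apply, Pi.smul_apply, smul_eq_mul, hx, hy]
    rw [mul_comm]
    exact (Complex.re_add_im (v i)).symm
  have hstar : star v = (fun i => (x i : ℂ)) - Complex.I • (fun i => (y i : ℂ)) := by
    funext i
    simp only [Pi.star_apply, Pi.sub_apply, Pi.smul_apply, smul_eq_mul, hx, hy,
      Complex.star_def]
    apply Complex.ext <;> simp
  rw [hstar]
  nth_rewrite 1 [hv]
  rw [mulVec_add, mulVec_smul, sub_dotProduct, smul_dotProduct, dotProduct_add,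
    dotProduct_smul, dotProduct_add, dotProduct_smul, dot_cast, dot_cast, dot_cast, dot_cast,
    dot_symm Q hQ y x]
  simp only [smul_eq_mul]
  push_cast
  ring_nf
  rw [Complex.I_sq]
  ring

lemma posdef_nonneg {Q : Matrix (Fin n) (Fin n) ℝ} (hQ : PosDefQuad Q) (x : Fin n → ℝ) :
    0 ≤ x ⬝ᵥ Q.mulVec x := by
  rcases eq_or_ne x 0 with rfl | hx
  · simp
  · exact (hQ x hx).le

lemma eig_abs_lt {A P : Matrix (Fin n) (Fin n) ℝ} (hPs : P.IsSymm) (hPd : PosDefQuad P)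
    (hQd : PosDefQuad (P - Aᵀ * P * A)) {μ : ℂ}
    (hμ : μ ∈ spectrum ℂ (A.map (algebraMap ℝ ℂ))) : ‖μ‖ < 1 := by
  obtain ⟨v, hv0, hAv⟩ := exists_eigvec hμ
  set x : Fin n → ℝ := fun i => (v i).re with hx
  set y : Fin n → ℝ := fun i => (v i).im with hy
  have hQs : (P - Aᵀ * P * A).IsSymm := by
    unfold Matrix.IsSymm
    rw [transpose_sub, transpose_mul, transpose_mul, transpose_transpose, hPs, mul_assoc]
  set p : ℝ := x ⬝ᵥ P.mulVec x + y ⬝ᵥ P.mulVec y with hp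
  set q : ℝ := x ⬝ᵥ (P - Aᵀ * P * A).mulVec x + y ⬝ᵥ (P - Aᵀ * P * A).mulVec y with hq
  have h1 : star v ⬝ᵥ (P.map (algebraMap ℝ ℂ)).mulVec v = (p : ℂ) := herm_form P hPs v
  have h2 : star v ⬝ᵥ ((P - Aᵀ * P * A).map (algebraMap ℝ ℂ)).mulVec v = (q : ℂ) :=
    herm_form _ hQs v
  have hmap : (P - Aᵀ * P * A).map (algebraMap ℝ ℂ)
      = P.map (algebraMap ℝ ℂ)
        - (A.map (algebraMap ℝ ℂ))ᵀ * P.map (algebraMap ℝ ℂ) * A.map (algebraMap ℝ ℂ) := by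
    ext i j
    simp [Matrix.map_apply, Matrix.sub_apply, Matrix.mul_apply, Finset.mul_sum,
      Finset.sum_mul, map_sub, map_sum, _root_.map_mul]
  have h3 : star v ⬝ᵥ ((A.map (algebraMap ℝ ℂ))ᵀ * P.map (algebraMap ℝ ℂ)
        * A.map (algebraMap ℝ ℂ)).mulVec v = (Complex.normSq μ : ℂ) * (p : ℂ) := by
    rw [← mulVec_mulVec, ← mulVec_mulVec, dotProduct_mulVec, vecMul_transpose,
      ← star_mulVec_real, hAv]
    rw [star_smul, smul_dotProduct, mulVec_smul, dotProduct_smul]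
    rw [h1]
    simp only [smul_eq_mul, RCLike.star_def]
    rw [← mul_assoc, mul_comm (starRingEnd ℂ μ) μ, Complex.mul_conj]
  have h4 : (q : ℂ) = (p : ℂ) - (Complex.normSq μ : ℂ) * (p : ℂ) := by
    rw [← h2, hmap, sub_mulVec, dotProduct_sub, h1, h3]
  have h5 : q = p - Complex.normSq μ * p := by exact_mod_cast h4
  have hxy : x ≠ 0 ∨ y ≠ 0 := by
    by_contra h
    push_neg at h
    apply hv0
    funext i
    have h1' := congrFun h.1 i
    have h2' := congrFun h.2 i
    simp only [hx, hy, Pi.zero_apply] at h1' h2'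
    exact Complex.ext h1' h2'
  have hppos : 0 < p := by
    rcases hxy with h | h
    · have := hPd x h
      have h2' := posdef_nonneg hPd y
      simp only [hp]; linarith
    · have := hPd y h
      have h2' := posdef_nonneg hPd x
      simp only [hp]; linarith
  have hqpos : 0 < q := by
    rcases hxy with h | h
    · have := hQd x h
      have h2' := posdef_nonneg hQd y
      simp only [hq]; linarith
    · have := hQd y h
      have h2' := posdef_nonneg hQd x
      simp only [hq]; linarith
  have hlt : Complex.normSq μ < 1 := by nlinarith
  have habs : ‖μ‖ ^ 2 < 1 := by rw [Complex.sq_norm]; exact hlt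
  nlinarith [norm_nonneg μ]


section Forward

attribute [local instance] Matrix.linftyOpNormedRing Matrix.linftyOpNormedAlgebra

lemma nnnorm_map_complex (B : Matrix (Fin n) (Fin n) ℝ) :
    ‖B.map (algebraMap ℝ ℂ)‖₊ = ‖B‖₊ := by
  rw [Matrix.linfty_opNNNorm_def, Matrix.linfty_opNNNorm_def]
  congr 1
  funext i
  congr 1
  funext j
  simp [Matrix.map_apply, Complex.coe_algebraMap]

lemma nnnorm_transpose_le (B : Matrix (Fin n) (Fin n) ℝ) :
    ‖Bᵀ‖₊ ≤ (n : ℝ≥0) * ‖B‖₊ := by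
  rw [Matrix.linfty_opNNNorm_def, Matrix.linfty_opNNNorm_def]
  apply Finset.sup_le
  intro i _
  calc ∑ j, ‖Bᵀ i j‖₊ = ∑ j, ‖B j i‖₊ := rfl
    _ ≤ ∑ j : Fin n, ∑ j', ‖B j j'‖₊ :=
        Finset.sum_le_sum fun j _ =>
          Finset.single_le_sum (f := fun j' => ‖B j j'‖₊) (fun j' _ => zero_le)
            (Finset.mem_univ i)
    _ ≤ ∑ _j : Fin n, (Finset.univ.sup fun i' => ∑ j', ‖B i' j'‖₊) :=
        Finset.sum_le_sum fun j _ =>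
          Finset.le_sup (f := fun i' => ∑ j', ‖B i' j'‖₊) (Finset.mem_univ j)
    _ = (n : ℝ≥0) * (Finset.univ.sup fun i' => ∑ j', ‖B i' j'‖₊) := by
        rw [Finset.sum_const, Finset.card_univ, Fintype.card_fin, nsmul_eq_mul]

lemma pow_nnnorm_eventually_le {A : Matrix (Fin n) (Fin n) ℝ} (hn : 0 < n)
    (h : ∀ μ ∈ spectrum ℂ (A.map (algebraMap ℝ ℂ)), ‖μ‖ < 1) :
    ∃ r : ℝ≥0, r < 1 ∧ ∀ᶠ k in atTop, ‖A ^ k‖₊ ≤ r ^ k := by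
  haveI : Nonempty (Fin n) := ⟨⟨0, hn⟩⟩
  set M : Matrix (Fin n) (Fin n) ℂ := A.map (algebraMap ℝ ℂ) with hM
  have hMpow : ∀ k : ℕ, M ^ k = (A ^ k).map (algebraMap ℝ ℂ) := by
    intro k
    rw [hM, ← RingHom.mapMatrix_apply, ← RingHom.mapMatrix_apply, map_pow]
  have hnorm1 : ∀ μ ∈ spectrum ℂ M, ‖μ‖₊ < 1 := by
    intro μ hμ
    have := h μ hμ
    rw [← NNReal.coe_lt_coe]
    simpa [coe_nnnorm] using this
  have hne : (spectrum ℂ M).Nonempty :=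
    spectrum.nonempty_of_isAlgClosed_of_finiteDimensional ℂ M
  have hρ : spectralRadius ℂ M < 1 := by
    have := spectrum.spectralRadius_lt_of_forall_lt_of_nonempty hne (r := 1) hnorm1
    simpa using this
  obtain ⟨r, hr1, hr2⟩ := ENNReal.lt_iff_exists_nnreal_btwn.mp hρ
  have hrlt1 : r < 1 := by exact_mod_cast hr2
  have hgel := spectrum.pow_nnnorm_pow_one_div_tendsto_nhds_spectralRadius M
  have hev : ∀ᶠ k : ℕ in atTop, (‖M ^ k‖₊ : ℝ≥0∞) ^ (1 / (k : ℝ)) < (r : ℝ≥0∞) :=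
    hgel.eventually_lt_const hr1
  refine ⟨r, hrlt1, ?_⟩
  filter_upwards [hev, eventually_ge_atTop 1] with k hk hk1
  have hk0 : (k : ℝ) ≠ 0 := by positivity
  have h1 : ((‖M ^ k‖₊ : ℝ≥0∞) ^ (1 / (k : ℝ))) ^ (k : ℝ) ≤ (r : ℝ≥0∞) ^ (k : ℝ) :=
    ENNReal.rpow_le_rpow hk.le (by positivity)
  rw [← ENNReal.rpow_mul, one_div_mul_cancel hk0, ENNReal.rpow_one] at h1
  have h2 : (‖M ^ k‖₊ : ℝ≥0∞) ≤ ((r ^ k : ℝ≥0) : ℝ≥0∞) := by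
    rwa [ENNReal.coe_pow, ← ENNReal.rpow_natCast]
  have h3 : ‖M ^ k‖₊ ≤ r ^ k := by exact_mod_cast h2
  rwa [hMpow, nnnorm_map_complex] at h3

lemma form_factor (B : Matrix (Fin n) (Fin n) ℝ) (x : Fin n → ℝ) :
    x ⬝ᵥ (Bᵀ * B).mulVec x = B.mulVec x ⬝ᵥ B.mulVec x := by
  rw [← mulVec_mulVec, dotProduct_mulVec, vecMul_transpose]

lemma form_factor_pow (A : Matrix (Fin n) (Fin n) ℝ) (k : ℕ) (x : Fin n → ℝ) :
    x ⬝ᵥ (Aᵀ ^ k * A ^ k).mulVec x = (A ^ k).mulVec x ⬝ᵥ (A ^ k).mulVec x := by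
  rw [← transpose_pow]; exact form_factor _ _

noncomputable def quadL (x : Fin n → ℝ) : Matrix (Fin n) (Fin n) ℝ →ₗ[ℝ] ℝ where
  toFun M := x ⬝ᵥ M.mulVec x
  map_add' M N := by simp [add_mulVec, dotProduct_add]
  map_smul' c M := by simp [smul_mulVec, dotProduct_smul]

lemma exists_P {A : Matrix (Fin n) (Fin n) ℝ} (hn : 0 < n)
    (h : ∀ μ ∈ spectrum ℂ (A.map (algebraMap ℝ ℂ)), ‖μ‖ < 1) :
    ∃ P : Matrix (Fin n) (Fin n) ℝ, P.IsSymm ∧ PosDefQuad P ∧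
      PosDefQuad (P - Aᵀ * P * A) := by
  obtain ⟨r, hr, hev⟩ := pow_nnnorm_eventually_le hn h
  set f : ℕ → Matrix (Fin n) (Fin n) ℝ := fun k => (A ^ k)ᵀ * (A ^ k) with hf
  have hrc : (r : ℝ) < 1 := hr
  have hsum : Summable f := by
    apply Summable.of_norm_bounded_eventually_nat (g := fun k => (n : ℝ) * ((r : ℝ) ^ 2) ^ k)
    · exact (summable_geometric_of_lt_one (by positivity)
        (by nlinarith [r.coe_nonneg])).mul_left _
    · filter_upwards [hev] with k hk
      have h1 : ‖f k‖₊ ≤ ‖(A ^ k)ᵀ‖₊ * ‖A ^ k‖₊ := nnnorm_mul_le _ _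
      have h2 : ‖(A ^ k)ᵀ‖₊ ≤ (n : ℝ≥0) * ‖A ^ k‖₊ := nnnorm_transpose_le _
      have h3 : ‖f k‖₊ ≤ (n : ℝ≥0) * (r ^ k * r ^ k) := by
        calc ‖f k‖₊ ≤ ‖(A ^ k)ᵀ‖₊ * ‖A ^ k‖₊ := h1
          _ ≤ ((n : ℝ≥0) * ‖A ^ k‖₊) * ‖A ^ k‖₊ := mul_le_mul_left h2 _
          _ = (n : ℝ≥0) * (‖A ^ k‖₊ * ‖A ^ k‖₊) := by ring
          _ ≤ (n : ℝ≥0) * (r ^ k * r ^ k) := by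
              exact mul_le_mul_right (mul_le_mul' hk hk) _
      calc ‖f k‖ = ((‖f k‖₊ : ℝ≥0) : ℝ) := (coe_nnnorm _).symm
        _ ≤ (((n : ℝ≥0) * (r ^ k * r ^ k) : ℝ≥0) : ℝ) := by exact_mod_cast h3
        _ = (n : ℝ) * ((r : ℝ) ^ 2) ^ k := by push_cast; ring
  set P : Matrix (Fin n) (Fin n) ℝ := ∑' k, f k with hP
  have hg : ∀ x : Fin n → ℝ, Summable fun k => (A ^ k).mulVec x ⬝ᵥ (A ^ k).mulVec x := by
    intro x
    have hs := hsum.map (LinearMap.toContinuousLinearMap (quadL x))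
      (LinearMap.toContinuousLinearMap (quadL x)).continuous
    refine hs.congr fun k => ?_
    simp [Function.comp, quadL, hf, form_factor_pow,
      LinearMap.coe_toContinuousLinearMap']
  have hq : ∀ x : Fin n → ℝ,
      x ⬝ᵥ P.mulVec x = ∑' k, (A ^ k).mulVec x ⬝ᵥ (A ^ k).mulVec x := by
    intro x
    have hL := ContinuousLinearMap.map_tsum (LinearMap.toContinuousLinearMap (quadL x)) hsum
    simp only [LinearMap.coe_toContinuousLinearMap', quadL, LinearMap.coe_mk,
      AddHom.coe_mk] at hL
    rw [hP, hL]
    congr 1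
    funext k
    show x ⬝ᵥ ((A ^ k)ᵀ * A ^ k) *ᵥ x = A ^ k *ᵥ x ⬝ᵥ A ^ k *ᵥ x
    exact form_factor _ _
  have hPs : P.IsSymm := by
    show Pᵀ = P
    rw [hP, Matrix.transpose_tsum]
    congr 1
    funext k
    rw [hf]
    simp [Matrix.transpose_mul, Matrix.transpose_transpose]
  have hPd : PosDefQuad P := by
    intro x hx
    rw [hq x]
    have h0 : (A ^ 0).mulVec x ⬝ᵥ (A ^ 0).mulVec x = x ⬝ᵥ x := by
      simp [pow_zero, one_mulVec]
    calc (0 : ℝ) < x ⬝ᵥ x := dot_self_pos hx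
      _ = (A ^ 0).mulVec x ⬝ᵥ (A ^ 0).mulVec x := h0.symm
      _ ≤ ∑' k, (A ^ k).mulVec x ⬝ᵥ (A ^ k).mulVec x :=
          Summable.le_tsum (hg x) 0 fun j _ => dot_self_nonneg _
  have hQd : PosDefQuad (P - Aᵀ * P * A) := by
    intro x hx
    have hsub : x ⬝ᵥ (P - Aᵀ * P * A).mulVec x
        = x ⬝ᵥ P.mulVec x - A.mulVec x ⬝ᵥ P.mulVec (A.mulVec x) := by
      rw [sub_mulVec, dotProduct_sub]
      congr 1
      rw [← mulVec_mulVec, ← mulVec_mulVec, dotProduct_mulVec, vecMul_transpose]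
    rw [hsub, hq x, hq (A.mulVec x)]
    have hshift : ∀ k : ℕ, (A ^ k).mulVec (A.mulVec x) = (A ^ (k + 1)).mulVec x := by
      intro k; rw [mulVec_mulVec, ← pow_succ]
    have heq : (∑' k, (A ^ k).mulVec (A.mulVec x) ⬝ᵥ (A ^ k).mulVec (A.mulVec x))
        = ∑' k, (A ^ (k + 1)).mulVec x ⬝ᵥ (A ^ (k + 1)).mulVec x := by
      congr 1; funext k; rw [hshift]
    rw [heq, Summable.tsum_eq_zero_add (hg x)]
    simp only [pow_zero, one_mulVec, add_sub_cancel_right]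
    exact dot_self_pos hx
  exact ⟨P, hPs, hPd, hQd⟩


end Forward

end LyapunovAux

theorem stmt_0 {n : ℕ} (A : Matrix (Fin n) (Fin n) ℝ) :
    specRad A < 1 ↔
      ∃ P : Matrix (Fin n) (Fin n) ℝ, P.IsSymm ∧ PosDefQuad P ∧
        PosDefQuad (P - Aᵀ * P * A) := by
  have hSimg : {r : ℝ | ∃ μ : ℂ, μ ∈ spectrum ℂ (A.map (algebraMap ℝ ℂ)) ∧ r = ‖μ‖}
      = (fun μ : ℂ => (‖μ‖ : ℝ)) '' spectrum ℂ (A.map (algebraMap ℝ ℂ)) := by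
    ext r
    constructor
    · rintro ⟨μ, hμ, rfl⟩; exact ⟨μ, hμ, rfl⟩
    · rintro ⟨μ, hμ, rfl⟩; exact ⟨μ, hμ, rfl⟩
  have hfin : {r : ℝ | ∃ μ : ℂ, μ ∈ spectrum ℂ (A.map (algebraMap ℝ ℂ)) ∧
      r = ‖μ‖}.Finite := by
    rw [hSimg]
    exact (Matrix.finite_spectrum _).image _
  constructor
  · intro hlt
    rcases Nat.eq_zero_or_pos n with rfl | hn
    · refine ⟨1, Matrix.isSymm_one, ?_, ?_⟩ <;> intro x hx <;>
        exact absurd (funext fun i => i.elim0) hx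
    · have hall : ∀ μ ∈ spectrum ℂ (A.map (algebraMap ℝ ℂ)), ‖μ‖ < 1 := by
        intro μ hμ
        have hmem : (‖μ‖ : ℝ) ∈
            {r : ℝ | ∃ μ' : ℂ, μ' ∈ spectrum ℂ (A.map (algebraMap ℝ ℂ)) ∧
              r = ‖μ'‖} := ⟨μ, hμ, rfl⟩
        exact lt_of_le_of_lt (le_csSup hfin.bddAbove hmem) hlt
      exact LyapunovAux.exists_P hn hall
  · rintro ⟨P, hPs, hPd, hQd⟩
    unfold specRad
    rcases Set.eq_empty_or_nonempty
      {r : ℝ | ∃ μ : ℂ, μ ∈ spectrum ℂ (A.map (algebraMap ℝ ℂ)) ∧ r = ‖μ‖} with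
      he | hne
    · rw [he, Real.sSup_empty]; norm_num
    · obtain ⟨μ, hμ, hr⟩ := hne.csSup_mem hfin
      rw [hr]
      exact LyapunovAux.eig_abs_lt hPs hPd hQd hμ
end

section
/- If a finite set of matrices {A₁,…,A_m} admits a common quadratic Lyapunov function, i.e., there is a symmetric positive definite P with A_iᵀPA_i − P negative definite for all i, then the joint spectral radius ρ(A₁,…,A_m) is strictly less than 1. -/
open Matrix

/-- The entrywise ℓ¹ matrix norm (a submultiplicative matrix norm). -/
noncomputable def mnorm {n : ℕ} (A : Matrix (Fin n) (Fin n) ℝ) : ℝ :=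
  ∑ i, ∑ j, |A i j|

/-- The product A_{w 0} * A_{w 1} * ⋯ * A_{w (k-1)} of matrices from the family `A`. -/
noncomputable def wordProd {n m : ℕ} (A : Fin m → Matrix (Fin n) (Fin n) ℝ)
    {k : ℕ} (w : Fin k → Fin m) : Matrix (Fin n) (Fin n) ℝ :=
  (List.ofFn fun i => A (w i)).prod

/-- ρ_k(Σ): the maximum over length-k products of the k-th root of their norm. -/
noncomputable def rhoK {n m : ℕ} (A : Fin m → Matrix (Fin n) (Fin n) ℝ) (k : ℕ) : ℝ :=
  sSup {r : ℝ | ∃ w : Fin k → Fin m, r = mnorm (wordProd A w) ^ ((1 : ℝ) / k)}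

/-- The joint spectral radius, realized as inf over k ≥ 1 of ρ_k (which equals
lim_{k→∞} ρ_k for submultiplicative norms). -/
noncomputable def jsr {n m : ℕ} (A : Fin m → Matrix (Fin n) (Fin n) ℝ) : ℝ :=
  ⨅ k : ℕ, rhoK A (k + 1)

lemma mnorm_nonneg {n : ℕ} (A : Matrix (Fin n) (Fin n) ℝ) : 0 ≤ mnorm A := by
  unfold mnorm; positivity

lemma quad_smul {n : ℕ} (Q : Matrix (Fin n) (Fin n) ℝ) (c : ℝ) (x : Fin n → ℝ) :
    (c • x) ⬝ᵥ Q.mulVec (c • x) = c ^ 2 * (x ⬝ᵥ Q.mulVec x) := by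
  rw [Matrix.mulVec_smul, smul_dotProduct, dotProduct_smul, smul_eq_mul, smul_eq_mul]; ring

lemma quad_continuous {n : ℕ} (Q : Matrix (Fin n) (Fin n) ℝ) :
    Continuous fun x : Fin n → ℝ => x ⬝ᵥ Q.mulVec x := by
  have : (fun x : Fin n → ℝ => x ⬝ᵥ Q.mulVec x)
      = fun x => ∑ i, x i * ∑ j, Q i j * x j := by
    funext x; simp [dotProduct, Matrix.mulVec]
  rw [this]; continuity

lemma quad_conj {n : ℕ} (P A : Matrix (Fin n) (Fin n) ℝ) (x : Fin n → ℝ) :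
    x ⬝ᵥ ((Aᵀ * P * A).mulVec x) = (A.mulVec x) ⬝ᵥ P.mulVec (A.mulVec x) := by
  rw [Matrix.dotProduct_mulVec, Matrix.dotProduct_mulVec, ← Matrix.vecMul_vecMul,
    ← Matrix.vecMul_vecMul, Matrix.vecMul_transpose]
  rw [Matrix.dotProduct_mulVec]

lemma quad_nonneg {n : ℕ} {Q : Matrix (Fin n) (Fin n) ℝ} (hQ : PosDefQuad Q)
    (x : Fin n → ℝ) : 0 ≤ x ⬝ᵥ Q.mulVec x := by
  by_cases hx : x = 0
  · subst hx; simp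
  · exact (hQ x hx).le

lemma posdef_lower {n : ℕ} {Q : Matrix (Fin n) (Fin n) ℝ} (hQ : PosDefQuad Q) :
    ∃ ε > 0, ∀ x : Fin n → ℝ, ε * ‖x‖ ^ 2 ≤ x ⬝ᵥ Q.mulVec x := by
  rcases Nat.eq_zero_or_pos n with hn | hn
  · subst hn
    refine ⟨1, one_pos, fun x => ?_⟩
    have hx : x = 0 := Subsingleton.elim _ _
    have h0 : ‖x‖ = 0 := by rw [hx]; exact norm_zero
    rw [h0]; simp [hx]
  · have : Nonempty (Fin n) := ⟨⟨0, hn⟩⟩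
    have hne : ((fun _ => (1:ℝ)) : Fin n → ℝ) ∈ Metric.sphere (0 : Fin n → ℝ) 1 := by
      simp [mem_sphere_zero_iff_norm]
    obtain ⟨u, hu, hmin⟩ := (isCompact_sphere (0 : Fin n → ℝ) 1).exists_isMinOn ⟨_, hne⟩
      (quad_continuous Q).continuousOn
    have hu1 : ‖u‖ = 1 := mem_sphere_zero_iff_norm.mp hu
    have hu0 : u ≠ 0 := by intro h; rw [h] at hu1; simp at hu1
    refine ⟨u ⬝ᵥ Q.mulVec u, hQ u hu0, fun x => ?_⟩
    by_cases hx : x = 0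
    · simp [hx]
    · have ht : 0 < ‖x‖ := norm_pos_iff.mpr hx
      have hmem : (‖x‖⁻¹ • x) ∈ Metric.sphere (0 : Fin n → ℝ) 1 := by
        simp [mem_sphere_zero_iff_norm, norm_smul, abs_of_pos (inv_pos.mpr ht),
          inv_mul_cancel₀ ht.ne']
      have h1 : u ⬝ᵥ Q.mulVec u ≤ (‖x‖⁻¹ • x) ⬝ᵥ Q.mulVec (‖x‖⁻¹ • x) := hmin hmem
      rw [quad_smul] at h1
      have h2 : (‖x‖⁻¹) ^ 2 * (x ⬝ᵥ Q.mulVec x) * ‖x‖ ^ 2 = x ⬝ᵥ Q.mulVec x := by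
        field_simp
      nlinarith [sq_nonneg ‖x‖, mul_le_mul_of_nonneg_right h1 (sq_nonneg ‖x‖)]

lemma quad_upper {n : ℕ} (Q : Matrix (Fin n) (Fin n) ℝ) (x : Fin n → ℝ) :
    x ⬝ᵥ Q.mulVec x ≤ mnorm Q * ‖x‖ ^ 2 := by
  have hx : ∀ i, |x i| ≤ ‖x‖ := fun i => by
    simpa [Real.norm_eq_abs] using norm_le_pi_norm x i
  calc x ⬝ᵥ Q.mulVec x = ∑ i, ∑ j, x i * (Q i j * x j) := by
        simp [dotProduct, Matrix.mulVec, Finset.mul_sum]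
    _ ≤ ∑ i, ∑ j, |Q i j| * ‖x‖ ^ 2 := by
        refine Finset.sum_le_sum fun i _ => Finset.sum_le_sum fun j _ => ?_
        calc x i * (Q i j * x j) ≤ |x i * (Q i j * x j)| := le_abs_self _
          _ = |Q i j| * (|x i| * |x j|) := by rw [abs_mul, abs_mul]; ring
          _ ≤ |Q i j| * (‖x‖ * ‖x‖) := by
              exact mul_le_mul_of_nonneg_left
                (mul_le_mul (hx i) (hx j) (abs_nonneg _) (norm_nonneg _)) (abs_nonneg _)
          _ = |Q i j| * ‖x‖ ^ 2 := by ring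
    _ = mnorm Q * ‖x‖ ^ 2 := by rw [mnorm, Finset.sum_mul]; simp [Finset.sum_mul]

lemma wordProd_zero {n m : ℕ} (A : Fin m → Matrix (Fin n) (Fin n) ℝ) (w : Fin 0 → Fin m) :
    wordProd A w = 1 := by simp [wordProd]

lemma wordProd_succ {n m k : ℕ} (A : Fin m → Matrix (Fin n) (Fin n) ℝ) (w : Fin (k+1) → Fin m) :
    wordProd A w = A (w 0) * wordProd A (fun i => w i.succ) := by
  simp [wordProd, List.ofFn_succ]

/-- A common quadratic Lyapunov function implies that the joint spectral radius
is strictly less than one. -/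
theorem stmt_7 {n m : ℕ} (hm : 0 < m)
    (A : Fin m → Matrix (Fin n) (Fin n) ℝ)
    (P : Matrix (Fin n) (Fin n) ℝ) (hsymm : P.IsSymm) (hP : PosDefQuad P)
    (hdec : ∀ i, PosDefQuad (P - (A i)ᵀ * P * A i)) :
    jsr A < 1 := by
  obtain ⟨α, hα, hαle⟩ := posdef_lower hP
  set M : ℝ := mnorm P + 1 with hMdef
  have hM : 0 < M := by have := mnorm_nonneg P; rw [hMdef]; linarith
  have hupper : ∀ x : Fin n → ℝ, x ⬝ᵥ P.mulVec x ≤ M * ‖x‖ ^ 2 := fun x => by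
    have h := quad_upper P x
    nlinarith [sq_nonneg ‖x‖]
  have hEx : ∀ i : Fin m, ∃ ε > 0, ∀ x : Fin n → ℝ,
      ε * ‖x‖ ^ 2 ≤ x ⬝ᵥ (P - (A i)ᵀ * P * A i).mulVec x := fun i => posdef_lower (hdec i)
  choose e he hle using hEx
  have hnem : Nonempty (Fin m) := ⟨⟨0, hm⟩⟩
  set ε' : ℝ := min (Finset.univ.inf' Finset.univ_nonempty e) M with hε'def
  have hεpos : 0 < ε' := by
    apply lt_min _ hM
    rw [Finset.lt_inf'_iff]
    exact fun i _ => he i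
  have hεle : ∀ i, ε' ≤ e i := fun i =>
    le_trans (min_le_left _ _) (Finset.inf'_le e (Finset.mem_univ i))
  have hεM : ε' ≤ M := min_le_right _ _
  set c : ℝ := 1 - ε' / M with hcdef
  have hc0 : 0 ≤ c := by
    rw [hcdef]; have : ε' / M ≤ 1 := (div_le_one hM).mpr hεM; linarith
  have hc1 : c < 1 := by
    rw [hcdef]; have : 0 < ε' / M := div_pos hεpos hM; linarith
  have hcontract : ∀ (i : Fin m) (x : Fin n → ℝ),
      ((A i).mulVec x) ⬝ᵥ P.mulVec ((A i).mulVec x) ≤ c * (x ⬝ᵥ P.mulVec x) := by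
    intro i x
    have h1 := hle i x
    rw [Matrix.sub_mulVec, dotProduct_sub, quad_conj] at h1
    have h2 := hupper x
    have h3 : ε' * ‖x‖ ^ 2 ≤ x ⬝ᵥ P.mulVec x
        - (A i).mulVec x ⬝ᵥ P.mulVec ((A i).mulVec x) :=
      le_trans (mul_le_mul_of_nonneg_right (hεle i) (sq_nonneg _)) h1
    have h4 : ε' / M * (x ⬝ᵥ P.mulVec x) ≤ ε' * ‖x‖ ^ 2 := by
      rw [div_mul_eq_mul_div, div_le_iff₀ hM]
      nlinarith [mul_le_mul_of_nonneg_left h2 hεpos.le]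
    rw [hcdef]; nlinarith
  have hword : ∀ (k : ℕ) (w : Fin k → Fin m) (x : Fin n → ℝ),
      ((wordProd A w).mulVec x) ⬝ᵥ P.mulVec ((wordProd A w).mulVec x)
        ≤ c ^ k * (x ⬝ᵥ P.mulVec x) := by
    intro k
    induction k with
    | zero => intro w x; simp [wordProd_zero, Matrix.one_mulVec]
    | succ k ih =>
      intro w x
      rw [wordProd_succ, ← Matrix.mulVec_mulVec]
      calc ((A (w 0)).mulVec ((wordProd A fun i => w i.succ).mulVec x)) ⬝ᵥ
            P.mulVec ((A (w 0)).mulVec ((wordProd A fun i => w i.succ).mulVec x))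
          ≤ c * (((wordProd A fun i => w i.succ).mulVec x) ⬝ᵥ
            P.mulVec (((wordProd A fun i => w i.succ)).mulVec x)) := hcontract _ _
        _ ≤ c * (c ^ k * (x ⬝ᵥ P.mulVec x)) := mul_le_mul_of_nonneg_left (ih _ x) hc0
        _ = c ^ (k+1) * (x ⬝ᵥ P.mulVec x) := by ring
  set d : ℝ := Real.sqrt c with hddef
  have hd0 : 0 ≤ d := Real.sqrt_nonneg c
  have hd1 : d < 1 := by
    rw [hddef, show (1:ℝ) = Real.sqrt 1 from Real.sqrt_one.symm]
    exact Real.sqrt_lt_sqrt hc0 hc1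
  have hcd : ∀ k : ℕ, c ^ k = (d ^ k) ^ 2 := by
    intro k
    rw [hddef, ← pow_mul, mul_comm k 2, pow_mul, Real.sq_sqrt hc0]
  set C : ℝ := (n : ℝ) ^ 2 * Real.sqrt (M / α) with hCdef
  have hC0 : 0 ≤ C := by positivity
  have hbound : ∀ (k : ℕ) (w : Fin k → Fin m), mnorm (wordProd A w) ≤ C * d ^ k := by
    intro k w
    have hentry : ∀ i j, |wordProd A w i j| ≤ Real.sqrt (M / α) * d ^ k := by
      intro i j
      set y := (wordProd A w).mulVec (Pi.single j 1) with hy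
      have h1 : α * ‖y‖ ^ 2 ≤ y ⬝ᵥ P.mulVec y := hαle y
      have h2 : y ⬝ᵥ P.mulVec y
          ≤ c ^ k * ((Pi.single j 1 : Fin n → ℝ) ⬝ᵥ P.mulVec (Pi.single j 1)) :=
        hword k w _
      have h3 : (Pi.single j 1 : Fin n → ℝ) ⬝ᵥ P.mulVec (Pi.single j 1) ≤ M := by
        have h := hupper (Pi.single j 1)
        rw [Pi.norm_single] at h; simpa using h
      have hck : 0 ≤ c ^ k := pow_nonneg hc0 k
      have h4 : ‖y‖ ^ 2 ≤ M / α * c ^ k := by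
        rw [div_mul_eq_mul_div, le_div_iff₀ hα]
        nlinarith [mul_le_mul_of_nonneg_left h3 hck]
      have h5 : ‖y‖ ≤ Real.sqrt (M / α) * d ^ k := by
        have h6 : Real.sqrt (M / α) * d ^ k = Real.sqrt (M / α * c ^ k) := by
          rw [Real.sqrt_mul (by positivity) (c ^ k), hcd k,
            Real.sqrt_sq (pow_nonneg hd0 k)]
        rw [h6, Real.le_sqrt (norm_nonneg y) (by positivity)]
        exact h4
      have h7 : |wordProd A w i j| ≤ ‖y‖ := by
        have h8 : y i = wordProd A w i j * 1 := by
          rw [hy, Matrix.mulVec_single]; simp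
        have := norm_le_pi_norm y i
        rw [Real.norm_eq_abs, h8, mul_one] at this
        exact this
      exact le_trans h7 h5
    calc mnorm (wordProd A w) = ∑ i, ∑ j, |wordProd A w i j| := rfl
      _ ≤ ∑ _i : Fin n, ∑ _j : Fin n, Real.sqrt (M / α) * d ^ k :=
          Finset.sum_le_sum fun i _ => Finset.sum_le_sum fun j _ => hentry i j
      _ = C * d ^ k := by
          simp [hCdef, Finset.sum_const]; ring
  obtain ⟨k0, hk0⟩ := exists_pow_lt_of_lt_one
    (show (0:ℝ) < 1 / (C + 1) by positivity) hd1
  have hdK : d ^ (k0 + 1) ≤ d ^ k0 := by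
    rw [pow_succ]
    nlinarith [pow_nonneg hd0 k0]
  have hb1 : C * d ^ (k0 + 1) < 1 := by
    have ha : C * d ^ (k0 + 1) ≤ C * d ^ k0 := mul_le_mul_of_nonneg_left hdK hC0
    have hb : C * d ^ k0 ≤ C * (1 / (C + 1)) :=
      mul_le_mul_of_nonneg_left hk0.le hC0
    have hcc : C * (1 / (C + 1)) < 1 := by
      rw [mul_one_div, div_lt_one (by linarith)]; linarith
    linarith
  have hb0 : 0 ≤ C * d ^ (k0 + 1) := by positivity
  have hKpos : (0:ℝ) < 1 / ((k0 + 1 : ℕ) : ℝ) := by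
    apply div_pos one_pos
    exact_mod_cast Nat.succ_pos k0
  have hrho : rhoK A (k0 + 1) ≤ (C * d ^ (k0 + 1)) ^ ((1:ℝ) / ((k0 + 1 : ℕ) : ℝ)) := by
    apply Real.sSup_le
    · rintro r ⟨w, rfl⟩
      exact Real.rpow_le_rpow (mnorm_nonneg _) (hbound (k0 + 1) w) hKpos.le
    · exact Real.rpow_nonneg hb0 _
  have hrho1 : rhoK A (k0 + 1) < 1 :=
    lt_of_le_of_lt hrho (Real.rpow_lt_one hb0 hb1 hKpos)
  have hbdd : BddBelow (Set.range fun k : ℕ => rhoK A (k + 1)) := by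
    refine ⟨0, ?_⟩
    rintro r ⟨k, rfl⟩
    have hw : (mnorm (wordProd A (fun _ : Fin (k + 1) => (⟨0, hm⟩ : Fin m)))) ^
        ((1:ℝ) / ((k + 1 : ℕ) : ℝ)) ∈
        {r : ℝ | ∃ w : Fin (k+1) → Fin m, r = mnorm (wordProd A w) ^ ((1:ℝ) / ((k+1 : ℕ) : ℝ))} :=
      ⟨_, rfl⟩
    have hfin : BddAbove {r : ℝ | ∃ w : Fin (k+1) → Fin m,
        r = mnorm (wordProd A w) ^ ((1:ℝ) / ((k+1 : ℕ) : ℝ))} := by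
      have hs : {r : ℝ | ∃ w : Fin (k+1) → Fin m,
          r = mnorm (wordProd A w) ^ ((1:ℝ) / ((k+1 : ℕ) : ℝ))}
          = Set.range (fun w : Fin (k+1) → Fin m =>
            mnorm (wordProd A w) ^ ((1:ℝ) / ((k+1 : ℕ) : ℝ))) := by
        ext r; simp [eq_comm, Set.mem_range]
      rw [hs]
      exact (Set.finite_range _).bddAbove
    exact le_trans (Real.rpow_nonneg (mnorm_nonneg _) _) (le_csSup hfin hw)
  have hfinal : jsr A ≤ rhoK A (k0 + 1) := ciInf_le hbdd k0
  exact lt_of_le_of_lt hfinal hrho1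
end

section
/- Let V: ℝⁿ → ℝ be continuous, positive definite (V(x) > 0 for x ≠ 0, V(0) = 0), and positively homogeneous of some degree d > 0, and suppose V(A_i x) < V(x) for all nonzero x and all matrices A_i in a finite set Σ. Then for every x₀ ∈ ℝⁿ and every switching sequence σ: ℕ → {1,…,m}, the trajectory x_{k+1} = A_{σ(k)} x_k converges to the origin. -/
open Matrix

/-- A common Lyapunov function (continuous, positive definite, positively homogeneous
of positive degree, strictly decreasing along all modes) implies convergence of all
trajectories of the switched system to the origin. -/
theorem stmt_8 {n m : ℕ} (A : Fin m → Matrix (Fin n) (Fin n) ℝ)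
    (V : (Fin n → ℝ) → ℝ) (d : ℝ) (hd : 0 < d)
    (hcont : Continuous V) (hV0 : V 0 = 0)
    (hpos : ∀ x : Fin n → ℝ, x ≠ 0 → 0 < V x)
    (hhom : ∀ (l : ℝ), 0 < l → ∀ x, V (l • x) = l ^ d * V x)
    (hdec : ∀ (i : Fin m) (x : Fin n → ℝ), x ≠ 0 → V ((A i).mulVec x) < V x) :
    ∀ (σ : ℕ → Fin m) (x : ℕ → (Fin n → ℝ)),
      (∀ k, x (k + 1) = (A (σ k)).mulVec (x k)) →
      Filter.Tendsto x Filter.atTop (nhds 0) := by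
  intro σ x hx
  -- trivial cases
  rcases Nat.eq_zero_or_pos m with hm | hm
  · subst hm; exact (σ 0).elim0
  rcases Nat.eq_zero_or_pos n with hn | hn
  · subst hn
    haveI : Unique (Fin 0 → ℝ) := Pi.uniqueOfIsEmpty _
    have : x = fun _ => 0 := funext fun k => Subsingleton.elim _ _
    rw [this]; exact tendsto_const_nhds
  haveI : Nonempty (Fin n) := Fin.pos_iff_nonempty.mp hn
  haveI : Nontrivial (Fin n → ℝ) := inferInstance
  have hVnn : ∀ y : Fin n → ℝ, 0 ≤ V y := by
    intro y
    by_cases h : y = 0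
    · simp [h, hV0]
    · exact (hpos y h).le
  -- the unit sphere
  have hS : IsCompact (Metric.sphere (0 : Fin n → ℝ) 1) := isCompact_sphere 0 1
  have hSne : (Metric.sphere (0 : Fin n → ℝ) 1).Nonempty :=
    NormedSpace.sphere_nonempty.mpr zero_le_one
  have hsph_ne : ∀ u : Fin n → ℝ, u ∈ Metric.sphere (0 : Fin n → ℝ) 1 → u ≠ 0 := by
    intro u hu h0
    rw [mem_sphere_zero_iff_norm] at hu
    simp [h0] at hu
  -- minimum of V on the sphere
  obtain ⟨u0, hu0, hmin⟩ := hS.exists_isMinOn hSne hcont.continuousOn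
  set m₀ := V u0 with hm₀
  have hm₀pos : 0 < m₀ := hpos u0 (hsph_ne u0 hu0)
  -- per-mode contraction factor on the sphere
  have hmulVec_cont : ∀ i : Fin m, Continuous fun y : Fin n → ℝ => (A i).mulVec y := by
    intro i
    have := (Matrix.mulVecLin (A i)).continuous_of_finiteDimensional
    exact this
  have hci : ∀ i : Fin m, ∃ ci : ℝ, ci < 1 ∧ 0 ≤ ci ∧
      ∀ u : Fin n → ℝ, ‖u‖ = 1 → V ((A i).mulVec u) ≤ ci * V u := by
    intro i
    have hgcont : ContinuousOn (fun u : Fin n → ℝ => V ((A i).mulVec u) / V u)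
        (Metric.sphere (0 : Fin n → ℝ) 1) := by
      apply ContinuousOn.div
      · exact (hcont.comp (hmulVec_cont i)).continuousOn
      · exact hcont.continuousOn
      · intro u hu; exact (hpos u (hsph_ne u hu)).ne'
    obtain ⟨v, hv, hvmax⟩ := hS.exists_isMaxOn hSne hgcont
    refine ⟨V ((A i).mulVec v) / V v, ?_, ?_, ?_⟩
    · rw [div_lt_one (hpos v (hsph_ne v hv))]
      exact hdec i v (hsph_ne v hv)
    · exact div_nonneg (hVnn _) (hVnn _)
    · intro u hu
      have hu' : u ∈ Metric.sphere (0 : Fin n → ℝ) 1 := by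
        rwa [mem_sphere_zero_iff_norm]
      have : V ((A i).mulVec u) / V u ≤ V ((A i).mulVec v) / V v := hvmax hu'
      have hVu : 0 < V u := hpos u (hsph_ne u hu')
      calc V ((A i).mulVec u) = (V ((A i).mulVec u) / V u) * V u := by
            field_simp
        _ ≤ (V ((A i).mulVec v) / V v) * V u :=
            mul_le_mul_of_nonneg_right this hVu.le
  choose ci hci1 hci0 hcib using hci
  -- global contraction factor
  haveI : Nonempty (Fin m) := Fin.pos_iff_nonempty.mp hm
  set c : ℝ := Finset.univ.sup' Finset.univ_nonempty ci with hc
  have hc1 : c < 1 := by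
    rw [hc, Finset.sup'_lt_iff]
    intro i _; exact hci1 i
  have hc0 : 0 ≤ c := le_trans (hci0 (Classical.arbitrary _))
    (Finset.le_sup' ci (Finset.mem_univ _))
  have hcb : ∀ i, ci i ≤ c := fun i => Finset.le_sup' ci (Finset.mem_univ i)
  -- scaling: contraction for all x
  have key : ∀ (i : Fin m) (y : Fin n → ℝ), V ((A i).mulVec y) ≤ c * V y := by
    intro i y
    by_cases h0 : y = 0
    · simp [h0, Matrix.mulVec_zero, hV0]
    · set r := ‖y‖ with hr
      have hrpos : 0 < r := norm_pos_iff.mpr h0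
      set u := r⁻¹ • y with hu
      have hun : ‖u‖ = 1 := by
        rw [hu, norm_smul, norm_inv, norm_norm, ← hr, inv_mul_cancel₀ hrpos.ne']
      have hyu : r • u = y := by
        rw [hu, smul_inv_smul₀ hrpos.ne']
      have h1 : V ((A i).mulVec y) = r ^ d * V ((A i).mulVec u) := by
        rw [← hyu, Matrix.mulVec_smul, hhom r hrpos]
      have h2 : V y = r ^ d * V u := by rw [← hyu, hhom r hrpos]
      rw [h1, h2]
      have hb : V ((A i).mulVec u) ≤ ci i * V u := hcib i u hun
      have : V ((A i).mulVec u) ≤ c * V u :=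
        hb.trans (mul_le_mul_of_nonneg_right (hcb i) (hVnn u))
      calc r ^ d * V ((A i).mulVec u) ≤ r ^ d * (c * V u) :=
            mul_le_mul_of_nonneg_left this (Real.rpow_nonneg hrpos.le d)
        _ = c * (r ^ d * V u) := by ring
  -- V along the trajectory decays geometrically
  have hVdecay : ∀ k, V (x k) ≤ c ^ k * V (x 0) := by
    intro k
    induction k with
    | zero => simp
    | succ k ih =>
      rw [hx k]
      calc V ((A (σ k)).mulVec (x k)) ≤ c * V (x k) := key _ _
        _ ≤ c * (c ^ k * V (x 0)) := mul_le_mul_of_nonneg_left ih hc0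
        _ = c ^ (k + 1) * V (x 0) := by ring
  have hVto0 : Filter.Tendsto (fun k => V (x k)) Filter.atTop (nhds 0) := by
    have h1 : Filter.Tendsto (fun k => c ^ k * V (x 0)) Filter.atTop (nhds 0) := by
      have := (tendsto_pow_atTop_nhds_zero_of_lt_one hc0 hc1).mul_const (V (x 0))
      simpa using this
    exact squeeze_zero (fun k => hVnn (x k)) hVdecay h1
  -- lower bound:  m₀ * ‖y‖^d ≤ V y
  have hlow : ∀ y : Fin n → ℝ, m₀ * ‖y‖ ^ d ≤ V y := by
    intro y
    by_cases h0 : y = 0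
    · simp [h0, hV0, Real.zero_rpow hd.ne']
    · set r := ‖y‖ with hr
      have hrpos : 0 < r := norm_pos_iff.mpr h0
      set u := r⁻¹ • y with hu
      have hun : u ∈ Metric.sphere (0 : Fin n → ℝ) 1 := by
        rw [mem_sphere_zero_iff_norm, hu, norm_smul, norm_inv, norm_norm, ← hr,
          inv_mul_cancel₀ hrpos.ne']
      have hyu : r • u = y := by rw [hu, smul_inv_smul₀ hrpos.ne']
      have h2 : V y = r ^ d * V u := by rw [← hyu, hhom r hrpos]
      rw [h2]
      have : m₀ ≤ V u := hmin hun
      calc m₀ * r ^ d ≤ V u * r ^ d :=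
            mul_le_mul_of_nonneg_right this (Real.rpow_nonneg hrpos.le d)
        _ = r ^ d * V u := by ring
  -- conclude ‖x k‖ → 0
  rw [tendsto_zero_iff_norm_tendsto_zero]
  have hbound : ∀ k, ‖x k‖ ≤ (V (x k) / m₀) ^ d⁻¹ := by
    intro k
    have h1 : ‖x k‖ ^ d ≤ V (x k) / m₀ := by
      rw [le_div_iff₀ hm₀pos]
      calc ‖x k‖ ^ d * m₀ = m₀ * ‖x k‖ ^ d := by ring
        _ ≤ V (x k) := hlow (x k)
    calc ‖x k‖ = (‖x k‖ ^ d) ^ d⁻¹ := by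
          rw [← Real.rpow_mul (norm_nonneg _), mul_inv_cancel₀ hd.ne', Real.rpow_one]
      _ ≤ (V (x k) / m₀) ^ d⁻¹ :=
          Real.rpow_le_rpow (Real.rpow_nonneg (norm_nonneg _) d) h1 (inv_nonneg.mpr hd.le)
  have hrhs : Filter.Tendsto (fun k => (V (x k) / m₀) ^ d⁻¹) Filter.atTop (nhds 0) := by
    have h1 : Filter.Tendsto (fun k => V (x k) / m₀) Filter.atTop (nhds 0) := by
      have := hVto0.div_const m₀
      simpa using this
    have h2 : ContinuousAt (fun t : ℝ => t ^ d⁻¹) 0 :=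
      Real.continuousAt_rpow_const 0 d⁻¹ (Or.inr (by positivity))
    have := h2.tendsto.comp h1
    simpa [Real.zero_rpow (inv_ne_zero hd.ne'), Function.comp_def] using this
  exact squeeze_zero (fun k => norm_nonneg _) hbound hrhs
end

section
/- Let A₁ = [[1,1],[0,1]] and A₂ = [[1,0],[1,1]]. For every nonzero x ∈ ℝ², the set of normalized vectors {Ax/‖Ax‖ : A a finite product of matrices from {A₁, A₂}} is infinite. -/
open Matrix

/-- The Euclidean norm on ℝ². -/
noncomputable def enorm {n : ℕ} (x : Fin n → ℝ) : ℝ :=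
  Real.sqrt (∑ i, x i ^ 2)

lemma enorm2_pos {x : Fin 2 → ℝ} (i : Fin 2) (hx : x i ≠ 0) : 0 < _root_.enorm x := by
  apply Real.sqrt_pos.mpr
  rw [Fin.sum_univ_two]
  have hp : 0 < x i ^ 2 := by positivity
  have h0 := sq_nonneg (x 0)
  have h1 := sq_nonneg (x 1)
  fin_cases i <;> simp at hp <;> nlinarith

lemma A1pow (k : ℕ) :
    (!![1, 1; 0, 1] : Matrix (Fin 2) (Fin 2) ℝ) ^ k = !![1, (k : ℝ); 0, 1] := by
  induction k with
  | zero => simp [Matrix.one_fin_two]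
  | succ n ih =>
    rw [pow_succ, ih, Matrix.mul_fin_two]
    push_cast
    norm_num [add_comm]

lemma A2pow (k : ℕ) :
    (!![1, 0; 1, 1] : Matrix (Fin 2) (Fin 2) ℝ) ^ k = !![1, 0; (k : ℝ), 1] := by
  induction k with
  | zero => simp [Matrix.one_fin_two]
  | succ n ih =>
    rw [pow_succ, ih, Matrix.mul_fin_two]
    push_cast
    norm_num [add_comm]

lemma key (v : ℕ → Fin 2 → ℝ) (i j : Fin 2) (c : ℝ) (hc : c ≠ 0)
    (hvi : ∀ n, v n i = c) (hvj : Function.Injective fun n => v n j) :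
    Function.Injective fun n => (_root_.enorm (v n))⁻¹ • v n := by
  intro m n h
  have hvm : v m i ≠ 0 := by rw [hvi]; exact hc
  have hvn : v n i ≠ 0 := by rw [hvi]; exact hc
  have hem : 0 < _root_.enorm (v m) := enorm2_pos i hvm
  have hen : 0 < _root_.enorm (v n) := enorm2_pos i hvn
  have hi : (_root_.enorm (v m))⁻¹ * v m i = (_root_.enorm (v n))⁻¹ * v n i := congrFun h i
  rw [hvi, hvi] at hi
  have hce : (_root_.enorm (v m))⁻¹ = (_root_.enorm (v n))⁻¹ := mul_right_cancel₀ hc hi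
  have hj : (_root_.enorm (v m))⁻¹ * v m j = (_root_.enorm (v n))⁻¹ * v n j := congrFun h j
  rw [hce] at hj
  exact hvj (mul_left_cancel₀ (inv_ne_zero hen.ne') hj)

theorem stmt_9 (x : Fin 2 → ℝ) (hx : x ≠ 0) :
    Set.Infinite {y : Fin 2 → ℝ |
      ∃ l : List (Matrix (Fin 2) (Fin 2) ℝ), l ≠ [] ∧
        (∀ B ∈ l, B = !![1, 1; 0, 1] ∨ B = !![1, 0; 1, 1]) ∧
        y = (_root_.enorm (l.prod.mulVec x))⁻¹ • l.prod.mulVec x} := by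
  have hne : x 0 ≠ 0 ∨ x 1 ≠ 0 := by
    by_contra h
    push_neg at h
    exact hx (by ext i; fin_cases i <;> simp [h.1, h.2])
  rcases hne with h0 | h1
  case inr =>
    -- use powers of A1
    set v : ℕ → Fin 2 → ℝ := fun n => ![x 0 + (n + 1 : ℕ) * x 1, x 1] with hv
    have hmv : ∀ n : ℕ,
        ((!![1, 1; 0, 1] : Matrix (Fin 2) (Fin 2) ℝ) ^ (n + 1)).mulVec x = v n := by
      intro n
      rw [A1pow]
      funext i
      fin_cases i <;>
        simp [Matrix.mulVec, dotProduct, Fin.sum_univ_two, hv]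
    apply Set.infinite_of_injective_forall_mem
      (f := fun n : ℕ => (_root_.enorm (v n))⁻¹ • v n)
    · apply key v 1 0 (x 1) h1
      · intro n; simp [hv]
      · intro m n h
        simp only [hv] at h
        simp at h
        exact h.resolve_right h1
    · intro n
      refine ⟨List.replicate (n + 1) !![1, 1; 0, 1], by simp, ?_, ?_⟩
      · intro B hB
        left
        exact List.eq_of_mem_replicate hB
      · rw [List.prod_replicate, hmv]
  case inl =>
    set v : ℕ → Fin 2 → ℝ := fun n => ![x 0, (n + 1 : ℕ) * x 0 + x 1] with hv
    have hmv : ∀ n : ℕ,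
        ((!![1, 0; 1, 1] : Matrix (Fin 2) (Fin 2) ℝ) ^ (n + 1)).mulVec x = v n := by
      intro n
      rw [A2pow]
      funext i
      fin_cases i <;>
        simp [Matrix.mulVec, dotProduct, Fin.sum_univ_two, hv]
    apply Set.infinite_of_injective_forall_mem
      (f := fun n : ℕ => (_root_.enorm (v n))⁻¹ • v n)
    · apply key v 0 1 (x 0) h0
      · intro n; simp [hv]
      · intro m n h
        simp only [hv] at h
        simp at h
        exact h.resolve_right h0
    · intro n
      refine ⟨List.replicate (n + 1) !![1, 0; 1, 1], by simp, ?_, ?_⟩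
      · intro B hB
        right
        exact List.eq_of_mem_replicate hB
      · rw [List.prod_replicate, hmv]
end

section
/- Let A₁ and A₂ be real 2×2 matrices such that A₁ has rank 1 (its rows span a line) and suppose V: ℝ² → ℝ is a nonzero homogeneous polynomial of degree d with maximum coefficient equal to 1 that satisfies V(A_i x) ≤ V(x) for all x and i ∈ {1,2}, V(x) ≥ 0 everywhere. If there exists a unit vector x with V(x) = 0 and if the normalized forward orbit {Ax/‖Ax‖ : A a product of A₁,A₂ with Ax ≠ 0} of x is infinite, then V is identically zero — contradiction; hence V is positive definite. -/
open Matrix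

/-- The Euclidean norm on ℝⁿ. -/
noncomputable def enorm₂ {n : ℕ} (x : Fin n → ℝ) : ℝ :=
  Real.sqrt (∑ i, x i ^ 2)

lemma enorm₂_pos {n : ℕ} {x : Fin n → ℝ} (hx : x ≠ 0) : 0 < enorm₂ x := by
  apply Real.sqrt_pos.mpr
  rcases Function.ne_iff.mp hx with ⟨i, hi⟩
  have hi2 : x i ≠ 0 := by simpa using hi
  have : (0:ℝ) < x i ^ 2 := by positivity
  exact lt_of_lt_of_le this (Finset.single_le_sum (fun j _ => sq_nonneg (x j)) (Finset.mem_univ i))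

lemma enorm₂_smul {n : ℕ} (c : ℝ) (x : Fin n → ℝ) : enorm₂ (c • x) = |c| * enorm₂ x := by
  unfold enorm₂
  rw [← Real.sqrt_sq_eq_abs, ← Real.sqrt_mul (sq_nonneg _), Finset.mul_sum]
  congr 1
  refine Finset.sum_congr rfl fun i _ => ?_
  simp [mul_pow]

lemma eval_smul_homog {p : MvPolynomial (Fin 2) ℝ} {d : ℕ} (h : p.IsHomogeneous d)
    (c : ℝ) (x : Fin 2 → ℝ) :
    MvPolynomial.eval (c • x) p = c ^ d * MvPolynomial.eval x p := by
  rw [MvPolynomial.eval_eq, MvPolynomial.eval_eq, Finset.mul_sum]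
  refine Finset.sum_congr rfl fun s hs => ?_
  have hd : ∑ i ∈ s.support, s i = d := by
    have h1 := h (MvPolynomial.mem_support_iff.mp hs)
    rw [← h1]
    simp [Finsupp.weight_apply, Finsupp.sum]
  calc MvPolynomial.coeff s p * ∏ i ∈ s.support, (c • x) i ^ s i
      = MvPolynomial.coeff s p * ((∏ i ∈ s.support, c ^ s i) * ∏ i ∈ s.support, x i ^ s i) := by
        rw [← Finset.prod_mul_distrib]
        simp [mul_pow]
    _ = c ^ d * (MvPolynomial.coeff s p * ∏ i ∈ s.support, x i ^ s i) := by
        rw [Finset.prod_pow_eq_pow_sum, hd]; ring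

/-- Let V be a nonzero homogeneous polynomial of degree d in two variables, with
maximum coefficient equal to 1, nonnegative everywhere, and nonincreasing along the
matrices A₁ (of rank one) and A₂. If every unit vector at which V vanishes has an
infinite normalized forward orbit under products of A₁ and A₂, then V is positive
definite. -/
theorem stmt_19 (A₁ A₂ : Matrix (Fin 2) (Fin 2) ℝ) (hrank : A₁.rank = 1)
    (p : MvPolynomial (Fin 2) ℝ) (d : ℕ) (hhom : p.IsHomogeneous d)
    (hcoeff_le : ∀ s, p.coeff s ≤ 1) (hcoeff_max : ∃ s, p.coeff s = 1)
    (hnonneg : ∀ x : Fin 2 → ℝ, 0 ≤ MvPolynomial.eval x p)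
    (hdec : ∀ x : Fin 2 → ℝ,
      MvPolynomial.eval (A₁.mulVec x) p ≤ MvPolynomial.eval x p ∧
      MvPolynomial.eval (A₂.mulVec x) p ≤ MvPolynomial.eval x p)
    (horbit : ∀ x : Fin 2 → ℝ, enorm₂ x = 1 → MvPolynomial.eval x p = 0 →
      Set.Infinite {y : Fin 2 → ℝ |
        ∃ l : List (Matrix (Fin 2) (Fin 2) ℝ), l ≠ [] ∧
          (∀ B ∈ l, B = A₁ ∨ B = A₂) ∧ l.prod.mulVec x ≠ 0 ∧
          y = (enorm₂ (l.prod.mulVec x))⁻¹ • l.prod.mulVec x}) :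
    ∀ x : Fin 2 → ℝ, x ≠ 0 → 0 < MvPolynomial.eval x p := by
  intro x hx
  rcases (hnonneg x).lt_or_eq with h | h
  · exact h
  exfalso
  have hp0 : p ≠ 0 := by
    rintro rfl
    rcases hcoeff_max with ⟨s, hs⟩
    simp at hs
  have hnx := enorm₂_pos hx
  set u : Fin 2 → ℝ := (enorm₂ x)⁻¹ • x with hu
  have hu1 : enorm₂ u = 1 := by
    rw [hu, enorm₂_smul, abs_of_pos (inv_pos.mpr hnx), inv_mul_cancel₀ hnx.ne']
  have hu0 : MvPolynomial.eval u p = 0 := by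
    rw [hu, eval_smul_homog hhom, ← h, mul_zero]
  have hS := horbit u hu1 hu0
  have hdecl : ∀ (l : List (Matrix (Fin 2) (Fin 2) ℝ)), (∀ B ∈ l, B = A₁ ∨ B = A₂) →
      ∀ v, MvPolynomial.eval (l.prod.mulVec v) p ≤ MvPolynomial.eval v p := by
    intro l
    induction l with
    | nil => intro _ v; simp [Matrix.one_mulVec]
    | cons B l ih =>
      intro hB v
      have h1 : MvPolynomial.eval ((B :: l).prod.mulVec v) p
          ≤ MvPolynomial.eval (l.prod.mulVec v) p := by
        rw [List.prod_cons, ← Matrix.mulVec_mulVec]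
        rcases hB B (List.mem_cons_self) with rfl | rfl
        · exact (hdec _).1
        · exact (hdec _).2
      exact h1.trans (ih (fun C hC => hB C (List.mem_cons_of_mem _ hC)) v)
  set Z : Set (Fin 2 → ℝ) := {y | enorm₂ y = 1 ∧ MvPolynomial.eval y p = 0} with hZdef
  have hSZ : {y : Fin 2 → ℝ |
      ∃ l : List (Matrix (Fin 2) (Fin 2) ℝ), l ≠ [] ∧
        (∀ B ∈ l, B = A₁ ∨ B = A₂) ∧ l.prod.mulVec u ≠ 0 ∧
        y = (enorm₂ (l.prod.mulVec u))⁻¹ • l.prod.mulVec u} ⊆ Z := by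
    rintro y ⟨l, -, hl, hw, rfl⟩
    have hnw := enorm₂_pos hw
    refine ⟨?_, ?_⟩
    · rw [enorm₂_smul, abs_of_pos (inv_pos.mpr hnw), inv_mul_cancel₀ hnw.ne']
    · have h1 : MvPolynomial.eval (l.prod.mulVec u) p = 0 :=
        le_antisymm ((hdecl l hl u).trans_eq hu0) (hnonneg _)
      rw [eval_smul_homog hhom, h1, mul_zero]
  have hZinf : Z.Infinite := hS.mono hSZ
  set q : Polynomial ℝ := MvPolynomial.eval₂ Polynomial.C ![1, Polynomial.X] p with hqdef
  have hq_eval : ∀ t : ℝ, q.eval t = MvPolynomial.eval ![1, t] p := by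
    intro t
    have h2 := MvPolynomial.eval₂_comp_left (Polynomial.evalRingHom t) Polynomial.C
      ![1, Polynomial.X] p
    have h3 : Polynomial.evalRingHom t q = q.eval t := rfl
    rw [← h3, hqdef, h2,
      show (Polynomial.evalRingHom t).comp Polynomial.C = RingHom.id ℝ by ext r; simp,
      show (⇑(Polynomial.evalRingHom t) ∘ ![1, Polynomial.X]) = ![1, t] by
        funext i; fin_cases i <;> simp]
    exact MvPolynomial.eval₂_id p
  have hvec : ∀ v : Fin 2 → ℝ, v 0 ≠ 0 → v = v 0 • ![1, v 1 / v 0] := by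
    intro v hv
    funext i
    fin_cases i
    · simp
    · show v 1 = v 0 * (v 1 / v 0)
      field_simp
  have key : ∀ v : Fin 2 → ℝ, v 0 ≠ 0 →
      MvPolynomial.eval v p = v 0 ^ d * q.eval (v 1 / v 0) := by
    intro v hv
    rw [hq_eval, ← eval_smul_homog hhom, ← hvec v hv]
  by_cases hq : q = 0
  · apply hp0
    apply MvPolynomial.funext
    intro v
    rw [map_zero]
    by_cases hv : v 0 = 0
    · set s1 : Polynomial ℝ :=
        MvPolynomial.eval₂ Polynomial.C ![Polynomial.X, Polynomial.C (v 1)] p with hs1def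
      have hs1_eval : ∀ a : ℝ, s1.eval a = MvPolynomial.eval ![a, v 1] p := by
        intro a
        have h2 := MvPolynomial.eval₂_comp_left (Polynomial.evalRingHom a) Polynomial.C
          ![Polynomial.X, Polynomial.C (v 1)] p
        have h3 : Polynomial.evalRingHom a s1 = s1.eval a := rfl
        rw [← h3, hs1def, h2,
          show (Polynomial.evalRingHom a).comp Polynomial.C = RingHom.id ℝ by ext r; simp,
          show (⇑(Polynomial.evalRingHom a) ∘ ![Polynomial.X, Polynomial.C (v 1)]) = ![a, v 1] by
            funext i; fin_cases i <;> simp]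
        exact MvPolynomial.eval₂_id p
      have hs10 : s1 = 0 := by
        apply Polynomial.eq_zero_of_infinite_isRoot
        apply Set.Infinite.mono ?_ ((Set.finite_singleton (0:ℝ)).infinite_compl)
        intro a ha
        have ha0 : a ≠ 0 := by simpa using ha
        have hA : (![a, v 1] : Fin 2 → ℝ) 0 ≠ 0 := by simpa using ha0
        show s1.IsRoot a
        rw [Polynomial.IsRoot, hs1_eval a, key _ hA, hq, Polynomial.eval_zero, mul_zero]
      have hveq : v = ![(0:ℝ), v 1] := by
        funext i; fin_cases i <;> simp [hv]
      rw [hveq, ← hs1_eval 0, hs10, Polynomial.eval_zero]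
    · rw [key v hv, hq, Polynomial.eval_zero, mul_zero]
  · have hroots : {t : ℝ | q.IsRoot t}.Finite := by
      rw [← Set.not_infinite]
      exact fun hi => hq (q.eq_zero_of_infinite_isRoot hi)
    have hsq : ∀ y ∈ Z, y 0 ^ 2 + y 1 ^ 2 = 1 := by
      rintro y ⟨hy1, -⟩
      have hy1' : Real.sqrt (∑ i, y i ^ 2) = 1 := hy1
      have := Real.sqrt_eq_one.mp hy1'
      rwa [Fin.sum_univ_two] at this
    set Z' : Set (Fin 2 → ℝ) := {y ∈ Z | y 0 ≠ 0} with hZ'def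
    have hZ'inf : Z'.Infinite := by
      have hsub : Z ⊆ Z' ∪ {![(0:ℝ),1], ![(0:ℝ),-1]} := by
        intro y hy
        by_cases h0 : y 0 = 0
        · right
          have h2 := hsq y hy
          rw [h0] at h2
          have h3 : (y 1 - 1) * (y 1 + 1) = 0 := by nlinarith
          rcases mul_eq_zero.mp h3 with h4 | h4
          · left; funext i; fin_cases i
            · simpa using h0
            · simp; linarith
          · right; funext i; fin_cases i
            · simpa using h0
            · simp; linarith
        · left; exact ⟨hy, h0⟩
      intro hfin
      exact (hZinf.mono hsub)
        (hfin.union ((Set.finite_singleton _).insert _))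
    have himg : ∀ y ∈ Z', q.IsRoot (y 1 / y 0) := by
      rintro y ⟨⟨hy1, hy0⟩, hyne⟩
      have hk := key y hyne
      rw [hy0] at hk
      rcases mul_eq_zero.mp hk.symm with h5 | h5
      · exact absurd ((pow_eq_zero_iff' ).mp h5).1 hyne
      · exact h5
    apply hZ'inf
    apply Set.Finite.of_finite_image
      (f := fun y : Fin 2 → ℝ => (y 1 / y 0, decide (0 < y 0)))
    · apply Set.Finite.subset (hroots.prod (Set.finite_univ (α := Bool)))
      rintro _ ⟨y, hy, rfl⟩
      exact ⟨himg y hy, Set.mem_univ _⟩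
    · rintro y ⟨hyZ, hyne⟩ z ⟨hzZ, hzne⟩ hyz
      simp only [Prod.mk.injEq, decide_eq_decide] at hyz
      obtain ⟨ht, hsgn⟩ := hyz
      have hy2 := hsq y hyZ
      have hz2 := hsq z hzZ
      have hyt : y 1 = (y 1 / y 0) * y 0 := by field_simp
      have hzt : z 1 = (y 1 / y 0) * z 0 := by rw [ht]; field_simp
      set t : ℝ := y 1 / y 0 with htdef
      have h1t : (0:ℝ) < 1 + t ^ 2 := by positivity
      have hy2' : y 0 ^ 2 * (1 + t ^ 2) = 1 := by rw [hyt] at hy2; linear_combination hy2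
      have hz2' : z 0 ^ 2 * (1 + t ^ 2) = 1 := by rw [hzt] at hz2; linear_combination hz2
      have hsq2 : y 0 ^ 2 = z 0 ^ 2 :=
        mul_right_cancel₀ h1t.ne' (hy2'.trans hz2'.symm)
      have hy0z : y 0 = z 0 := by
        rcases sq_eq_sq_iff_eq_or_eq_neg.mp hsq2 with h7 | h7
        · exact h7
        · exfalso
          rcases hzne.lt_or_gt with hzlt | hzlt
          · have h8 : 0 < y 0 := by rw [h7]; linarith
            linarith [hsgn.mp h8]
          · have h8 : ¬ (0 < y 0) := by rw [h7]; linarith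
            exact h8 (hsgn.mpr hzlt)
      funext i
      fin_cases i
      · exact hy0z
      · show y 1 = z 1
        rw [hyt, hzt, hy0z]
end
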